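/- For ν^ℤ-almost every ω, the Lyapunov exponent of the Schrödinger cocycle at energy E = 0 vanishes: lim_{n→∞} (1/n) log ‖T_{n,ω,0}‖ = 0, where T_{n,ω,0} = Π_{n,0} ⋯ Π_{1,0} is the n-step transfer matrix at energy 0 for the potential v_n = ξ_n − ξ_{n+1}. -/

import Mathlib

open MeasureTheory Filter

noncomputable section

/-- `P` is the two-sided infinite product `ν^ℤ` of copies of `ν`, characterized by its
values on cylinder sets. -/
def IsProductMeasureZ (ν : Measure ℝ) (P : Measure (ℤ → ℝ)) : Prop :=
  ∀ (s : Finset ℤ) (f : ℤ → Set ℝ), (∀ i ∈ s, MeasurableSet (f i)) →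
    P {ω | ∀ i ∈ s, ω i ∈ f i} = ∏ i ∈ s, ν (f i)

/-- The one-step transfer matrix `Π_{n,E} = [[E - v_n, -1], [1, 0]]` at energy `E = 0`
for the potential `v_n = ξ_n - ξ_{n+1}`. -/
def stepMat (ξ : ℤ → ℝ) (n : ℤ) : Matrix (Fin 2) (Fin 2) ℝ :=
  !![0 - (ξ n - ξ (n + 1)), -1; 1, 0]

/-- The `n`-step transfer matrix `T_{n,ω,0} = Π_{n,0} ⋯ Π_{1,0}`. -/
def transfer0 (ξ : ℤ → ℝ) : ℕ → Matrix (Fin 2) (Fin 2) ℝ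
  | 0 => 1
  | n + 1 => stepMat ξ ((n : ℤ) + 1) * transfer0 ξ n

/-- The operator norm (on the Euclidean space `ℝ²`) of a `2 × 2` real matrix. -/
def opNorm (A : Matrix (Fin 2) (Fin 2) ℝ) : ℝ :=
  ‖LinearMap.toContinuousLinearMap (Matrix.toEuclideanLin A)‖

namespace Lyap
open Matrix Real
open scoped Matrix.Norms.L2Operator

lemma opNorm_eq (A : Matrix (Fin 2) (Fin 2) ℝ) : opNorm A = ‖A‖ := rfl

def φ : ℝ := (1 + Real.sqrt 5) / 2
def Amat (b : ℝ) : Matrix (Fin 2) (Fin 2) ℝ := !![b, -1; 1, 0]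
def Lmat (a : ℝ) : Matrix (Fin 2) (Fin 2) ℝ := !![1, 0; a, 1]
def Dmat (x : ℝ) : Matrix (Fin 2) (Fin 2) ℝ := !![x, -1; x^2 + 1, -x]
def Smat : Matrix (Fin 2) (Fin 2) ℝ := !![1, 1; φ, 1 - φ]
def Cmat (a : ℝ) : Matrix (Fin 2) (Fin 2) ℝ :=
  (2 * φ - 1)⁻¹ • !![φ - 1 + a, 1; φ - a, -1]
def Emat0 : Matrix (Fin 2) (Fin 2) ℝ := !![0, φ - 1; -φ, 0]
def Emat1 : Matrix (Fin 2) (Fin 2) ℝ := !![0, φ; 1 - φ, 0]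

def Qmat (ξ : ℤ → ℝ) : ℕ → Matrix (Fin 2) (Fin 2) ℝ
  | 0 => Lmat (ξ 1)
  | n + 1 => Dmat (ξ ((n : ℤ) + 2)) * Qmat ξ n

lemma sqrt5_sq : Real.sqrt 5 ^ 2 = 5 := Real.sq_sqrt (by norm_num)
lemma sqrt5_pos : 0 < Real.sqrt 5 := Real.sqrt_pos.2 (by norm_num)
lemma sqrt5_le_3 : Real.sqrt 5 ≤ 3 := by
  nlinarith [sqrt5_sq, sqrt5_pos]
lemma two_le_sqrt5 : 2 ≤ Real.sqrt 5 := by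
  nlinarith [sqrt5_sq, sqrt5_pos]
lemma φ_pos : 0 < φ := by unfold φ; nlinarith [sqrt5_pos]
lemma one_le_φ : 1 ≤ φ := by unfold φ; nlinarith [two_le_sqrt5]
lemma φ_le_2 : φ ≤ 2 := by unfold φ; nlinarith [sqrt5_le_3]
lemma φ_sq : φ ^ 2 = φ + 1 := by unfold φ; nlinarith [sqrt5_sq]
lemma φ_ne : φ ≠ 0 := ne_of_gt φ_pos
lemma φ_mul : φ * (φ - 1) = 1 := by nlinarith [φ_sq]
lemma φ_inv : φ⁻¹ = φ - 1 := inv_eq_of_mul_eq_one_right φ_mul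

lemma stepAL (ξ : ℤ → ℝ) (k : ℤ) : stepMat ξ k = Amat (ξ (k + 1)) * Lmat (ξ k) := by
  ext i j
  fin_cases i <;> fin_cases j <;>
    simp [stepMat, Amat, Lmat, Matrix.mul_apply, Fin.sum_univ_two] <;> ring

lemma LA (a : ℝ) : Lmat a * Amat a = Dmat a := by
  ext i j
  fin_cases i <;> fin_cases j <;>
    simp [Dmat, Amat, Lmat, Matrix.mul_apply, Fin.sum_univ_two] <;> ring

lemma decomp (ξ : ℤ → ℝ) (n : ℕ) :
    transfer0 ξ (n + 1) = Amat (ξ ((n : ℤ) + 2)) * Qmat ξ n := by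
  induction n with
  | zero =>
      show stepMat ξ ((0 : ℤ) + 1) * 1 = _
      rw [mul_one, stepAL]
      norm_num [Qmat]
  | succ n ih =>
      show stepMat ξ (((n + 1 : ℕ) : ℤ) + 1) * transfer0 ξ (n + 1) = _
      rw [ih, stepAL]
      have h1 : ((n + 1 : ℕ) : ℤ) + 1 = (n : ℤ) + 2 := by push_cast; ring
      have h2 : ((n + 1 : ℕ) : ℤ) + 1 + 1 = (n : ℤ) + 3 := by push_cast; ring
      rw [h1]
      have h2 : (n : ℤ) + 2 + 1 = (n : ℤ) + 3 := by ring
      rw [h2]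
      have : Qmat ξ (n+1) = Dmat (ξ ((n : ℤ) + 2)) * Qmat ξ n := rfl
      rw [this, ← LA]
      have h3 : ((n+1:ℕ) : ℤ) + 2 = (n : ℤ) + 3 := by push_cast; ring
      rw [h3]
      noncomm_ring


lemma DS0 : Dmat 0 * Smat = Smat * Emat0 := by
  ext i j
  fin_cases i <;> fin_cases j <;>
    simp [Dmat, Smat, Emat0, Matrix.mul_apply, Fin.sum_univ_two]
  all_goals
    first
    | ring1
    | linear_combination φ_sq
    | linear_combination -φ_sq

lemma DS1 : Dmat 1 * Smat = Smat * Emat1 := by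
  ext i j
  fin_cases i <;> fin_cases j <;>
    simp [Dmat, Smat, Emat1, Matrix.mul_apply, Fin.sum_univ_two]
  all_goals
    first
    | ring1
    | linear_combination φ_sq
    | linear_combination -φ_sq

lemma twoφ_ne : 2 * φ - 1 ≠ 0 := by
  have := one_le_φ; intro h; linarith

lemma SC (a : ℝ) : Smat * Cmat a = Lmat a := by
  have h := twoφ_ne
  have h' : φ * 2 - 1 ≠ 0 := by rwa [mul_comm]
  ext i j
  fin_cases i <;> fin_cases j <;>
    simp [Smat, Cmat, Lmat, Matrix.mul_apply, Fin.sum_univ_two, Matrix.smul_apply,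
      smul_eq_mul]
  all_goals field_simp
  all_goals
    first
    | ring1
    | linear_combination φ_sq
    | linear_combination -φ_sq
    | linear_combination a * φ_sq
    | linear_combination (-a) * φ_sq

def ShapeD (M : Matrix (Fin 2) (Fin 2) ℝ) (u : ℝ) : Prop :=
  ∃ s t : ℝ, |s| = 1 ∧ |t| = 1 ∧ M = !![s * φ ^ u, 0; 0, t * φ ^ (-u)]
def ShapeA (M : Matrix (Fin 2) (Fin 2) ℝ) (u : ℝ) : Prop :=
  ∃ s t : ℝ, |s| = 1 ∧ |t| = 1 ∧ M = !![0, s * φ ^ u; t * φ ^ (-u), 0]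

lemma φ_rpow_neg_one : φ ^ (-1 : ℝ) = φ - 1 := by
  rw [show (-1 : ℝ) = -(1 : ℝ) by norm_num, Real.rpow_neg (le_of_lt φ_pos),
    Real.rpow_one, φ_inv]

lemma emat0_shape : ShapeA Emat0 (-1) := by
  refine ⟨1, -1, by norm_num, by norm_num, ?_⟩
  rw [φ_rpow_neg_one, neg_neg, Real.rpow_one]
  unfold Emat0
  norm_num

lemma emat1_shape : ShapeA Emat1 1 := by
  refine ⟨1, -1, by norm_num, by norm_num, ?_⟩
  rw [Real.rpow_one, show (-1 : ℝ) = -(1 : ℝ) by norm_num,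
    Real.rpow_neg (le_of_lt φ_pos), Real.rpow_one, φ_inv]
  unfold Emat1
  norm_num

lemma mulAD {E M : Matrix (Fin 2) (Fin 2) ℝ} {a u : ℝ} (hE : ShapeA E a) (hM : ShapeD M u) :
    ShapeA (E * M) (a - u) := by
  obtain ⟨s, t, hs, ht, rfl⟩ := hE
  obtain ⟨s', t', hs', ht', rfl⟩ := hM
  refine ⟨s * t', t * s', by rw [abs_mul, hs, ht']; norm_num,
    by rw [abs_mul, ht, hs']; norm_num, ?_⟩
  have h1 : φ ^ a * φ ^ (-u) = φ ^ (a - u) := by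
    rw [← Real.rpow_add φ_pos]; try congr 1; try ring
  have h2 : φ ^ (-a) * φ ^ u = φ ^ (-(a - u)) := by
    rw [← Real.rpow_add φ_pos]; try congr 1; try ring
  have h3 : φ ^ (-a) * φ ^ u = φ ^ (u - a) := by
    rw [← Real.rpow_add φ_pos]; try congr 1; try ring
  have h4 : φ ^ a * φ ^ (-u) = φ ^ (-u + a) := by
    rw [← Real.rpow_add φ_pos]; try congr 1; try ring
  have h5 : φ ^ (-a) * φ ^ u = φ ^ (-a + u) := by
    rw [← Real.rpow_add φ_pos]; try congr 1; try ring
  ext i j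
  fin_cases i <;> fin_cases j <;>
    simp [Matrix.mul_apply, Fin.sum_univ_two]
  all_goals
    first
    | ring1
    | linear_combination (s * t') * h1
    | linear_combination (t * s') * h2
    | linear_combination (t * s') * h3
    | linear_combination (s * t') * h4
    | linear_combination (t * s') * h5

lemma mulAA {E M : Matrix (Fin 2) (Fin 2) ℝ} {a u : ℝ} (hE : ShapeA E a) (hM : ShapeA M u) :
    ShapeD (E * M) (a - u) := by
  obtain ⟨s, t, hs, ht, rfl⟩ := hE
  obtain ⟨s', t', hs', ht', rfl⟩ := hM
  refine ⟨s * t', t * s', by rw [abs_mul, hs, ht']; norm_num,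
    by rw [abs_mul, ht, hs']; norm_num, ?_⟩
  have h1 : φ ^ a * φ ^ (-u) = φ ^ (a - u) := by
    rw [← Real.rpow_add φ_pos]; try congr 1; try ring
  have h2 : φ ^ (-a) * φ ^ u = φ ^ (-(a - u)) := by
    rw [← Real.rpow_add φ_pos]; try congr 1; try ring
  have h3 : φ ^ (-a) * φ ^ u = φ ^ (u - a) := by
    rw [← Real.rpow_add φ_pos]; try congr 1; try ring
  have h4 : φ ^ a * φ ^ (-u) = φ ^ (-u + a) := by
    rw [← Real.rpow_add φ_pos]; try congr 1; try ring
  have h5 : φ ^ (-a) * φ ^ u = φ ^ (-a + u) := by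
    rw [← Real.rpow_add φ_pos]; try congr 1; try ring
  ext i j
  fin_cases i <;> fin_cases j <;>
    simp [Matrix.mul_apply, Fin.sum_univ_two]
  all_goals
    first
    | ring1
    | linear_combination (s * t') * h1
    | linear_combination (t * s') * h2
    | linear_combination (t * s') * h3
    | linear_combination (s * t') * h4
    | linear_combination (t * s') * h5

def walk (ξ : ℤ → ℝ) (n : ℕ) : ℝ :=
  ∑ i ∈ Finset.range n, (-1 : ℝ) ^ i * (2 * ξ ((i : ℤ) + 2) - 1)

lemma shape_main (ξ : ℤ → ℝ) (hξ : ∀ k : ℤ, ξ k = 0 ∨ ξ k = 1) (n : ℕ) :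
    ∃ (M : Matrix (Fin 2) (Fin 2) ℝ) (u : ℝ),
      (ShapeD M u ∨ ShapeA M u) ∧ u = (-1 : ℝ) ^ (n + 1) * walk ξ n ∧
      Qmat ξ n = Smat * M * Cmat (ξ 1) := by
  induction n with
  | zero =>
      refine ⟨1, 0, Or.inl ⟨1, 1, by norm_num, by norm_num, ?_⟩, by simp [walk], ?_⟩
      · rw [neg_zero, Real.rpow_zero]
        simp [Matrix.one_fin_two]
      · rw [mul_one, SC]; rfl
  | succ n ih =>
      obtain ⟨M, u, hMu, hu, hQ⟩ := ih
      have hQ1 : Qmat ξ (n + 1) = Dmat (ξ ((n : ℤ) + 2)) * Qmat ξ n := rfl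
      have hwalk : walk ξ (n + 1) = walk ξ n + (-1 : ℝ) ^ n * (2 * ξ ((n : ℤ) + 2) - 1) := by
        unfold walk; rw [Finset.sum_range_succ]
      rcases hξ ((n : ℤ) + 2) with h01 | h01
      · -- ξ = 0, e = -1, new matrix Emat0, exponent -1 - u
        refine ⟨Emat0 * M, -1 - u, ?_, ?_, ?_⟩
        · rcases hMu with hM | hM
          · exact Or.inr (mulAD emat0_shape hM)
          · exact Or.inl (mulAA emat0_shape hM)
        · have hnn : (-1 : ℝ) ^ n * (-1) ^ n = 1 := by
            rw [← pow_add, ← two_mul, pow_mul]; norm_num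
          rw [hu, hwalk, h01, pow_succ, pow_succ]
          linear_combination hnn
        · rw [hQ1, hQ, h01, ← mul_assoc, ← mul_assoc, DS0, mul_assoc Smat Emat0 M]
      · refine ⟨Emat1 * M, 1 - u, ?_, ?_, ?_⟩
        · rcases hMu with hM | hM
          · exact Or.inr (mulAD emat1_shape hM)
          · exact Or.inl (mulAA emat1_shape hM)
        · have hnn : (-1 : ℝ) ^ n * (-1) ^ n = 1 := by
            rw [← pow_add, ← two_mul, pow_mul]; norm_num
          rw [hu, hwalk, h01, pow_succ, pow_succ]
          linear_combination -hnn
        · rw [hQ1, hQ, h01, ← mul_assoc, ← mul_assoc, DS1, mul_assoc Smat Emat1 M]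


lemma coord_abs_le (x : EuclideanSpace ℝ (Fin 2)) (i : Fin 2) : |x i| ≤ ‖x‖ := by
  rw [EuclideanSpace.norm_eq, ← Real.sqrt_sq_eq_abs]
  apply Real.sqrt_le_sqrt
  rw [Fin.sum_univ_two]
  fin_cases i <;> simp [Real.norm_eq_abs, sq_abs] <;>
    nlinarith [sq_nonneg (x 0), sq_nonneg (x 1)]

lemma sqrt_sum_le (a b : ℝ) : Real.sqrt (a ^ 2 + b ^ 2) ≤ |a| + |b| := by
  have h : a ^ 2 + b ^ 2 ≤ (|a| + |b|) ^ 2 := by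
    nlinarith [abs_nonneg a, abs_nonneg b, sq_abs a, sq_abs b]
  calc Real.sqrt (a ^ 2 + b ^ 2) ≤ Real.sqrt ((|a| + |b|) ^ 2) := Real.sqrt_le_sqrt h
    _ = |a| + |b| := by
        rw [Real.sqrt_sq (by positivity)]

lemma image_coord (A : Matrix (Fin 2) (Fin 2) ℝ) (x : EuclideanSpace ℝ (Fin 2)) (i : Fin 2) :
    ((Matrix.toEuclideanLin A).toContinuousLinearMap x) i = A i 0 * x 0 + A i 1 * x 1 := by
  fin_cases i <;> simp [Matrix.toEuclideanLin_apply, Matrix.mulVec, dotProduct, Fin.sum_univ_two]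

lemma opNorm_le_sum (A : Matrix (Fin 2) (Fin 2) ℝ) :
    ‖A‖ ≤ |A 0 0| + |A 0 1| + |A 1 0| + |A 1 1| := by
  rw [Matrix.l2_opNorm_def]
  apply ContinuousLinearMap.opNorm_le_bound _ (by positivity)
  intro x
  have h0 := coord_abs_le x 0
  have h1 := coord_abs_le x 1
  have hx : (0:ℝ) ≤ ‖x‖ := norm_nonneg x
  set T := (Matrix.toEuclideanLin (𝕜 := ℝ) (m := Fin 2) (n := Fin 2)).trans
      LinearMap.toContinuousLinearMap A with hT
  have hc : ∀ i, (T x) i = A i 0 * x 0 + A i 1 * x 1 := fun i => image_coord A x i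
  have hnorm : ‖T x‖ = Real.sqrt ((T x 0) ^ 2 + (T x 1) ^ 2) := by
    rw [EuclideanSpace.norm_eq, Fin.sum_univ_two]
    simp [Real.norm_eq_abs, sq_abs]
  rw [hnorm, hc 0, hc 1]
  have e0 : |A 0 0 * x 0 + A 0 1 * x 1| ≤ (|A 0 0| + |A 0 1|) * ‖x‖ := by
    calc |A 0 0 * x 0 + A 0 1 * x 1| ≤ |A 0 0 * x 0| + |A 0 1 * x 1| := abs_add_le _ _
      _ = |A 0 0| * |x 0| + |A 0 1| * |x 1| := by rw [abs_mul, abs_mul]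
      _ ≤ (|A 0 0| + |A 0 1|) * ‖x‖ := by
          nlinarith [abs_nonneg (A 0 0), abs_nonneg (A 0 1), abs_nonneg (x 0), abs_nonneg (x 1)]
  have e1 : |A 1 0 * x 0 + A 1 1 * x 1| ≤ (|A 1 0| + |A 1 1|) * ‖x‖ := by
    calc |A 1 0 * x 0 + A 1 1 * x 1| ≤ |A 1 0 * x 0| + |A 1 1 * x 1| := abs_add_le _ _
      _ = |A 1 0| * |x 0| + |A 1 1| * |x 1| := by rw [abs_mul, abs_mul]
      _ ≤ (|A 1 0| + |A 1 1|) * ‖x‖ := by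
          nlinarith [abs_nonneg (A 1 0), abs_nonneg (A 1 1), abs_nonneg (x 0), abs_nonneg (x 1)]
  calc Real.sqrt ((A 0 0 * x 0 + A 0 1 * x 1) ^ 2 + (A 1 0 * x 0 + A 1 1 * x 1) ^ 2)
      ≤ |A 0 0 * x 0 + A 0 1 * x 1| + |A 1 0 * x 0 + A 1 1 * x 1| := sqrt_sum_le _ _
    _ ≤ (|A 0 0| + |A 0 1|) * ‖x‖ + (|A 1 0| + |A 1 1|) * ‖x‖ := add_le_add e0 e1
    _ = (|A 0 0| + |A 0 1| + |A 1 0| + |A 1 1|) * ‖x‖ := by ring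

lemma abs_entry_le (A : Matrix (Fin 2) (Fin 2) ℝ) (i j : Fin 2) : |A i j| ≤ ‖A‖ := by
  have he : ‖(EuclideanSpace.single j (1:ℝ) : EuclideanSpace ℝ (Fin 2))‖ = 1 := by
    rw [EuclideanSpace.norm_single]; norm_num
  set x : EuclideanSpace ℝ (Fin 2) := EuclideanSpace.single j (1:ℝ) with hxdef
  set T := (Matrix.toEuclideanLin (𝕜 := ℝ) (m := Fin 2) (n := Fin 2)).trans
      LinearMap.toContinuousLinearMap A with hT
  have hval : (T x) i = A i j := by
    have h := image_coord A x i
    rw [hT]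
    simp only [LinearEquiv.trans_apply]
    rw [h]
    have h0 : x 0 = if (0 : Fin 2) = j then 1 else 0 := EuclideanSpace.single_apply j 1 0
    have h1 : x 1 = if (1 : Fin 2) = j then 1 else 0 := EuclideanSpace.single_apply j 1 1
    rw [h0, h1]
    fin_cases j <;> norm_num
  have h2 : |(T x) i| ≤ ‖T x‖ := coord_abs_le _ i
  have h3 : ‖T x‖ ≤ ‖T‖ * ‖x‖ := T.le_opNorm x
  rw [hval] at h2
  rw [he, mul_one] at h3
  calc |A i j| ≤ ‖T x‖ := h2
    _ ≤ ‖T‖ := h3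
    _ = ‖A‖ := by rw [Matrix.l2_opNorm_def]

lemma det_transfer0 (ξ : ℤ → ℝ) (n : ℕ) : (transfer0 ξ n).det = 1 := by
  induction n with
  | zero => simp [transfer0]
  | succ n ih =>
      have : transfer0 ξ (n+1) = stepMat ξ ((n : ℤ) + 1) * transfer0 ξ n := rfl
      rw [this, Matrix.det_mul, ih, mul_one]
      unfold stepMat
      rw [Matrix.det_fin_two_of]
      ring

lemma opNorm_lower (T : Matrix (Fin 2) (Fin 2) ℝ) (hdet : T.det = 1) : 1/2 ≤ ‖T‖ := by
  have h1 : T 0 0 * T 1 1 - T 0 1 * T 1 0 = 1 := by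
    rw [← hdet, Matrix.det_fin_two]
  have e00 := abs_entry_le T 0 0
  have e01 := abs_entry_le T 0 1
  have e10 := abs_entry_le T 1 0
  have e11 := abs_entry_le T 1 1
  have hN : (0:ℝ) ≤ ‖T‖ := norm_nonneg _
  have p1 : T 0 0 * T 1 1 ≤ |T 0 0| * |T 1 1| := by
    rw [← abs_mul]; exact le_abs_self _
  have p2 : -(|T 0 1| * |T 1 0|) ≤ T 0 1 * T 1 0 := by
    rw [← abs_mul]; exact neg_abs_le _
  nlinarith [abs_nonneg (T 0 0), abs_nonneg (T 0 1), abs_nonneg (T 1 0), abs_nonneg (T 1 1)]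


lemma rpow_abs_ge (u : ℝ) : φ ^ u ≤ φ ^ |u| :=
  Real.rpow_le_rpow_of_exponent_le one_le_φ (le_abs_self u)

lemma rpow_abs_ge' (u : ℝ) : φ ^ (-u) ≤ φ ^ |u| :=
  Real.rpow_le_rpow_of_exponent_le one_le_φ (neg_le_abs u)

lemma rpow_pos (u : ℝ) : 0 < φ ^ u := Real.rpow_pos_of_pos φ_pos u

lemma sum_abs_lit (a b c d : ℝ) :
    |(!![a,b;c,d]) 0 0| + |(!![a,b;c,d]) 0 1| + |(!![a,b;c,d]) 1 0| + |(!![a,b;c,d]) 1 1|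
      = |a| + |b| + |c| + |d| := rfl

lemma opNorm_le_sum' (a b c d : ℝ) : ‖!![a,b;c,d]‖ ≤ |a| + |b| + |c| + |d| := by
  have h := opNorm_le_sum !![a,b;c,d]
  rwa [sum_abs_lit] at h

lemma shape_norm {M : Matrix (Fin 2) (Fin 2) ℝ} {u : ℝ}
    (h : ShapeD M u ∨ ShapeA M u) : ‖M‖ ≤ 2 * φ ^ |u| := by
  have hb1 : ∀ s : ℝ, |s| = 1 → |s * φ ^ u| ≤ φ ^ |u| := by
    intro s hs
    rw [abs_mul, hs, one_mul, abs_of_pos (rpow_pos u)]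
    exact rpow_abs_ge u
  have hb2 : ∀ t : ℝ, |t| = 1 → |t * φ ^ (-u)| ≤ φ ^ |u| := by
    intro t ht
    rw [abs_mul, ht, one_mul, abs_of_pos (rpow_pos (-u))]
    exact rpow_abs_ge' u
  rcases h with ⟨s, t, hs, ht, rfl⟩ | ⟨s, t, hs, ht, rfl⟩ <;>
  · refine le_trans (opNorm_le_sum' _ _ _ _) ?_
    have h1 := hb1 s hs
    have h2 := hb2 t ht
    rw [abs_zero]
    linarith

lemma Amat_norm {b : ℝ} (hb : |b| ≤ 1) : ‖Amat b‖ ≤ 3 := by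
  unfold Amat
  refine le_trans (opNorm_le_sum' _ _ _ _) ?_
  rw [abs_zero, abs_one, abs_neg, abs_one]
  linarith

lemma Smat_norm : ‖Smat‖ ≤ 5 := by
  unfold Smat
  refine le_trans (opNorm_le_sum' _ _ _ _) ?_
  rw [abs_one]
  have h1 : |φ| = φ := abs_of_pos φ_pos
  have h2 : |1 - φ| = φ - 1 := by
    rw [abs_sub_comm, abs_of_nonneg (by linarith [one_le_φ])]
  rw [h1, h2]
  linarith [φ_le_2]

lemma Cmat_norm {a : ℝ} (ha : |a| ≤ 1) : ‖Cmat a‖ ≤ 4 := by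
  unfold Cmat
  rw [norm_smul]
  have h2φ : (2:ℝ) ≤ 2 * φ - 1 := by
    have : (3:ℝ)/2 ≤ φ := by unfold φ; nlinarith [two_le_sqrt5]
    linarith
  have hc : ‖(2 * φ - 1)⁻¹‖ ≤ 1/2 := by
    rw [Real.norm_eq_abs, abs_of_pos (by positivity : (0:ℝ) < (2 * φ - 1)⁻¹)]
    rw [inv_le_comm₀ (by linarith) (by norm_num)]
    linarith
  have hB : ‖!![φ - 1 + a, 1; φ - a, -1]‖ ≤ 8 := by
    refine le_trans (opNorm_le_sum' _ _ _ _) ?_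
    rw [abs_one, abs_neg, abs_one]
    have h1 : |φ - 1 + a| ≤ 3 := by
      have := abs_le.1 ha
      have := φ_le_2
      have := φ_pos
      rw [abs_le]; constructor <;> linarith
    have h2 : |φ - a| ≤ 3 := by
      have := abs_le.1 ha
      have := φ_le_2
      have := φ_pos
      rw [abs_le]; constructor <;> linarith
    linarith
  calc ‖(2 * φ - 1)⁻¹‖ * ‖!![φ - 1 + a, 1; φ - a, -1]‖ ≤ (1/2) * 8 := by
        apply mul_le_mul hc hB (norm_nonneg _) (by norm_num)
    _ = 4 := by norm_num

lemma xi_abs_le {ξ : ℤ → ℝ} (hξ : ∀ k : ℤ, ξ k = 0 ∨ ξ k = 1) (k : ℤ) : |ξ k| ≤ 1 := by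
  rcases hξ k with h | h <;> rw [h] <;> norm_num

lemma transfer_upper {ξ : ℤ → ℝ} (hξ : ∀ k : ℤ, ξ k = 0 ∨ ξ k = 1) (n : ℕ) :
    ‖transfer0 ξ (n+1)‖ ≤ 120 * φ ^ |walk ξ n| := by
  obtain ⟨M, u, hMu, hu, hQ⟩ := shape_main ξ hξ n
  have habsu : |u| = |walk ξ n| := by
    rw [hu, abs_mul, abs_pow, abs_neg, abs_one, one_pow, one_mul]
  have hM : ‖M‖ ≤ 2 * φ ^ |walk ξ n| := habsu ▸ shape_norm hMu
  have hA : ‖Amat (ξ ((n:ℤ) + 2))‖ ≤ 3 := Amat_norm (xi_abs_le hξ _)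
  have hC : ‖Cmat (ξ 1)‖ ≤ 4 := Cmat_norm (xi_abs_le hξ _)
  have hT : transfer0 ξ (n+1) = Amat (ξ ((n:ℤ) + 2)) * (Smat * M * Cmat (ξ 1)) := by
    rw [decomp, hQ]
  rw [hT]
  have hpos : (0:ℝ) < φ ^ |walk ξ n| := rpow_pos _
  have h1 : ‖Smat * M‖ ≤ 5 * (2 * φ ^ |walk ξ n|) :=
    le_trans (Matrix.l2_opNorm_mul _ _)
      (mul_le_mul Smat_norm hM (norm_nonneg _) (by norm_num))
  have h2 : ‖Smat * M * Cmat (ξ 1)‖ ≤ (5 * (2 * φ ^ |walk ξ n|)) * 4 :=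
    le_trans (Matrix.l2_opNorm_mul _ _)
      (mul_le_mul h1 hC (norm_nonneg _) (by positivity))
  have h3 : ‖Amat (ξ ((n:ℤ) + 2)) * (Smat * M * Cmat (ξ 1))‖ ≤ 3 * ((5 * (2 * φ ^ |walk ξ n|)) * 4) :=
    le_trans (Matrix.l2_opNorm_mul _ _)
      (mul_le_mul hA h2 (norm_nonneg _) (by norm_num))
  calc ‖Amat (ξ ((n:ℤ) + 2)) * (Smat * M * Cmat (ξ 1))‖
      ≤ 3 * ((5 * (2 * φ ^ |walk ξ n|)) * 4) := h3
    _ = 120 * φ ^ |walk ξ n| := by ring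


section Prob
open ProbabilityTheory
variable {ν : Measure ℝ} {P : Measure (ℤ → ℝ)}

lemma marg (hP : IsProductMeasureZ ν P) (a : ℤ) {s : Set ℝ} (hs : MeasurableSet s) :
    P {ω | ω a ∈ s} = ν s := by
  have h := hP {a} (fun _ => s) (fun i _ => hs)
  have hset : {ω : ℤ → ℝ | ∀ i ∈ ({a} : Finset ℤ), ω i ∈ s} = {ω | ω a ∈ s} := by
    ext ω; simp
  rw [hset, Finset.prod_singleton] at h
  exact h

lemma pair (hP : IsProductMeasureZ ν P) {a b : ℤ} (hab : a ≠ b) {s t : Set ℝ}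
    (hs : MeasurableSet s) (ht : MeasurableSet t) :
    P ({ω | ω a ∈ s} ∩ {ω | ω b ∈ t}) = ν s * ν t := by
  classical
  set f : ℤ → Set ℝ := fun i => if i = a then s else t with hf
  have hfa : f a = s := if_pos rfl
  have hfb : f b = t := if_neg (Ne.symm hab)
  have hmeas : ∀ i ∈ ({a, b} : Finset ℤ), MeasurableSet (f i) := by
    intro i _
    by_cases hi : i = a
    · rw [hf]; simp only [hi, if_pos rfl]; exact hs
    · rw [hf]; simp only [if_neg hi]; exact ht
  have h := hP {a, b} f hmeas
  have hset : {ω : ℤ → ℝ | ∀ i ∈ ({a, b} : Finset ℤ), ω i ∈ f i}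
      = ({ω | ω a ∈ s} ∩ {ω | ω b ∈ t}) := by
    ext ω
    simp only [Finset.mem_insert, Finset.mem_singleton, Set.mem_setOf_eq, Set.mem_inter_iff]
    constructor
    · intro hω
      exact ⟨hfa ▸ hω a (Or.inl rfl), hfb ▸ hω b (Or.inr rfl)⟩
    · rintro ⟨h1, h2⟩ i (rfl | rfl)
      · rwa [hfa]
      · rwa [hfb]
  rw [hset, Finset.prod_pair hab, hfa, hfb] at h
  exact h

lemma map_eval (hP : IsProductMeasureZ ν P) (a : ℤ) :
    P.map (fun ω => ω a) = ν := by
  apply Measure.ext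
  intro s hs
  rw [Measure.map_apply (measurable_pi_apply a) hs]
  exact marg hP a hs

lemma ae01 (hν : ν = (1 / 2 : ENNReal) • Measure.dirac (0 : ℝ)
      + (1 / 2 : ENNReal) • Measure.dirac (1 : ℝ))
    (hP : IsProductMeasureZ ν P) [IsProbabilityMeasure P] :
    ∀ᵐ ω ∂P, ∀ k : ℤ, ω k = 0 ∨ ω k = 1 := by
  rw [ae_all_iff]
  intro k
  have hms : MeasurableSet ({0, 1} : Set ℝ) :=
    (measurableSet_singleton 1).insert 0
  have h1 : P {ω | ω k ∈ ({0, 1} : Set ℝ)} = 1 := by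
    rw [marg hP k hms, hν]
    rw [Measure.add_apply, Measure.smul_apply, Measure.smul_apply,
      Measure.dirac_apply_of_mem (by norm_num), Measure.dirac_apply_of_mem (by norm_num)]
    simp only [smul_eq_mul, mul_one]
    exact ENNReal.add_halves 1
  have hmeas2 : MeasurableSet {ω : ℤ → ℝ | ω k ∈ ({0, 1} : Set ℝ)} :=
    (measurable_pi_apply k) hms
  rw [ae_iff]
  have hset : {ω : ℤ → ℝ | ¬(ω k = 0 ∨ ω k = 1)} = {ω : ℤ → ℝ | ω k ∈ ({0, 1} : Set ℝ)}ᶜ := by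
    ext ω; simp
  rw [hset, prob_compl_eq_zero_iff hmeas2]
  exact h1

def Xv (i : ℕ) (ω : ℤ → ℝ) : ℝ := (-1 : ℝ) ^ i * (2 * ω ((i : ℤ) + 2) - 1)

def gfun (i : ℕ) (x : ℝ) : ℝ := (-1 : ℝ) ^ i * (2 * x - 1)

lemma gfun_meas (i : ℕ) : Measurable (gfun i) := by
  unfold gfun; fun_prop

lemma Xv_meas (i : ℕ) : Measurable (Xv i) := by
  unfold Xv
  exact (((measurable_pi_apply _).const_mul 2).sub_const 1).const_mul _

lemma Xv_eq (i : ℕ) : Xv i = gfun i ∘ (fun ω : ℤ → ℝ => ω ((i : ℤ) + 2)) := rfl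

lemma map_Xv (hP : IsProductMeasureZ ν P) (i : ℕ) :
    P.map (Xv i) = ν.map (gfun i) := by
  rw [Xv_eq, ← Measure.map_map (gfun_meas i) (measurable_pi_apply _), map_eval hP]

lemma map_gfun (hν : ν = (1 / 2 : ENNReal) • Measure.dirac (0 : ℝ)
      + (1 / 2 : ENNReal) • Measure.dirac (1 : ℝ)) (i : ℕ) :
    ν.map (gfun i) = (1 / 2 : ENNReal) • Measure.dirac ((-1 : ℝ) ^ i * (-1))
      + (1 / 2 : ENNReal) • Measure.dirac ((-1 : ℝ) ^ i) := by
  rw [hν]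
  have hg := gfun_meas i
  rw [Measure.map_add _ _ hg, Measure.map_smul, Measure.map_smul,
    Measure.map_dirac' hg, Measure.map_dirac' hg]
  have h0 : gfun i 0 = (-1 : ℝ) ^ i * (-1) := by unfold gfun; ring
  have h1 : gfun i 1 = (-1 : ℝ) ^ i := by unfold gfun; ring
  rw [h0, h1]

lemma ident_Xv (hν : ν = (1 / 2 : ENNReal) • Measure.dirac (0 : ℝ)
      + (1 / 2 : ENNReal) • Measure.dirac (1 : ℝ))
    (hP : IsProductMeasureZ ν P) (i : ℕ) :
    IdentDistrib (Xv i) (Xv 0) P P := by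
  refine ⟨(Xv_meas i).aemeasurable, (Xv_meas 0).aemeasurable, ?_⟩
  rw [map_Xv hP, map_Xv hP, map_gfun hν, map_gfun hν]
  rcases Nat.even_or_odd i with hi | hi
  · rw [hi.neg_one_pow]
    norm_num
  · rw [hi.neg_one_pow]
    norm_num
    rw [add_comm]

lemma indep_Xv (hP : IsProductMeasureZ ν P) [IsProbabilityMeasure P]
    {i j : ℕ} (hij : i ≠ j) : IndepFun (Xv i) (Xv j) P := by
  rw [indepFun_iff_measure_inter_preimage_eq_mul]
  intro s t hs ht
  have hab : (i : ℤ) + 2 ≠ (j : ℤ) + 2 := by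
    intro h
    apply hij
    have := add_right_cancel h
    exact_mod_cast this
  have hpre1 : Xv i ⁻¹' s = {ω : ℤ → ℝ | ω ((i : ℤ) + 2) ∈ gfun i ⁻¹' s} := rfl
  have hpre2 : Xv j ⁻¹' t = {ω : ℤ → ℝ | ω ((j : ℤ) + 2) ∈ gfun j ⁻¹' t} := rfl
  rw [hpre1, hpre2, pair hP hab (gfun_meas i hs) (gfun_meas j ht),
    marg hP _ (gfun_meas i hs), marg hP _ (gfun_meas j ht)]

lemma integrable_id_dirac (c : ℝ) : Integrable (fun x : ℝ => x) (Measure.dirac c) := by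
  apply (integrable_const c).congr
  rw [Filter.EventuallyEq, MeasureTheory.ae_dirac_eq]
  exact Filter.eventually_pure.2 rfl

lemma integrable_Xv (hν : ν = (1 / 2 : ENNReal) • Measure.dirac (0 : ℝ)
      + (1 / 2 : ENNReal) • Measure.dirac (1 : ℝ))
    (hP : IsProductMeasureZ ν P) [IsProbabilityMeasure P] :
    Integrable (Xv 0) P := by
  apply Integrable.mono' (integrable_const (1 : ℝ)) (Xv_meas 0).aestronglyMeasurable
  filter_upwards [ae01 hν hP] with ω h01
  rcases h01 2 with h | h <;>
    simp [Xv, Real.norm_eq_abs, h] <;> norm_num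

lemma exp_Xv (hν : ν = (1 / 2 : ENNReal) • Measure.dirac (0 : ℝ)
      + (1 / 2 : ENNReal) • Measure.dirac (1 : ℝ))
    (hP : IsProductMeasureZ ν P) [IsProbabilityMeasure P] :
    ∫ ω, Xv 0 ω ∂P = 0 := by
  have hmap : P.map (Xv 0) = (1 / 2 : ENNReal) • Measure.dirac (-1 : ℝ)
      + (1 / 2 : ENNReal) • Measure.dirac (1 : ℝ) := by
    rw [map_Xv hP, map_gfun hν]
    norm_num
  have hInt : ∫ x, x ∂(P.map (Xv 0)) = ∫ ω, Xv 0 ω ∂P :=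
    integral_map (Xv_meas 0).aemeasurable aestronglyMeasurable_id
  rw [← hInt, hmap]
  have hi1 : Integrable (fun x : ℝ => x) ((1 / 2 : ENNReal) • Measure.dirac (-1 : ℝ)) := by
    rw [integrable_smul_measure (by norm_num) (by norm_num)]
    exact integrable_id_dirac (-1)
  have hi2 : Integrable (fun x : ℝ => x) ((1 / 2 : ENNReal) • Measure.dirac (1 : ℝ)) := by
    rw [integrable_smul_measure (by norm_num) (by norm_num)]
    exact integrable_id_dirac 1
  rw [integral_add_measure hi1 hi2, integral_smul_measure, integral_smul_measure,
    integral_dirac, integral_dirac]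
  norm_num

lemma slln (hν : ν = (1 / 2 : ENNReal) • Measure.dirac (0 : ℝ)
      + (1 / 2 : ENNReal) • Measure.dirac (1 : ℝ))
    (hP : IsProductMeasureZ ν P) [IsProbabilityMeasure P] :
    ∀ᵐ ω ∂P, Tendsto (fun n : ℕ => walk ω n / n) atTop (nhds (0 : ℝ)) := by
  have h := strong_law_ae_real Xv (integrable_Xv hν hP)
    (fun i j hij => indep_Xv hP hij) (fun i => ident_Xv hν hP i)
  have hE : (∫ ω, Xv 0 ω ∂P) = 0 := exp_Xv hν hP
  filter_upwards [h] with ω hω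
  have : (fun n : ℕ => (∑ i ∈ Finset.range n, Xv i ω) / n)
      = fun n : ℕ => walk ω n / n := rfl
  rw [this, hE] at hω
  exact hω

end Prob

lemma final_det (ω : ℤ → ℝ) (h01 : ∀ k : ℤ, ω k = 0 ∨ ω k = 1)
    (hlim : Tendsto (fun n : ℕ => walk ω n / n) atTop (nhds (0 : ℝ))) :
    Tendsto (fun n : ℕ => (1 / (n : ℝ)) * Real.log (opNorm (transfer0 ω n)))
      atTop (nhds 0) := by
  have hlogφ : 0 ≤ Real.log φ := Real.log_nonneg one_le_φ
  have habs : Tendsto (fun n : ℕ => |walk ω n| / n) atTop (nhds (0 : ℝ)) := by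
    have h := hlim.abs
    rw [abs_zero] at h
    apply h.congr
    intro n
    rw [abs_div, Nat.abs_cast]
  have hg : Tendsto (fun n : ℕ => (1 / (n : ℝ)) * Real.log 120
      + (|walk ω n| / n) * Real.log φ + (1 / (n : ℝ)) * Real.log φ) atTop (nhds 0) := by
    have t1 := tendsto_one_div_atTop_nhds_zero_nat.mul_const (Real.log 120)
    have t2 := habs.mul_const (Real.log φ)
    have t3 := tendsto_one_div_atTop_nhds_zero_nat.mul_const (Real.log φ)
    have h := (t1.add t2).add t3
    simpa using h
  have hl : Tendsto (fun n : ℕ => (1 / (n : ℝ)) * Real.log (1/2)) atTop (nhds (0 : ℝ)) := by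
    simpa using tendsto_one_div_atTop_nhds_zero_nat.mul_const (Real.log (1/2))
  apply tendsto_of_tendsto_of_tendsto_of_le_of_le' hl hg
  · filter_upwards [eventually_ge_atTop 1] with n hn
    obtain ⟨m, rfl⟩ : ∃ m, n = m + 1 := ⟨n - 1, (Nat.succ_pred_eq_of_pos hn).symm⟩
    have hpos : (0:ℝ) ≤ 1 / (((m+1 : ℕ)) : ℝ) := by positivity
    have hlow : (1/2 : ℝ) ≤ ‖transfer0 ω (m+1)‖ :=
      opNorm_lower _ (det_transfer0 ω (m+1))
    have hlog := Real.log_le_log (by norm_num : (0:ℝ) < 1/2) hlow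
    rw [opNorm_eq]
    exact mul_le_mul_of_nonneg_left hlog hpos
  · filter_upwards [eventually_ge_atTop 1] with n hn
    obtain ⟨m, rfl⟩ : ∃ m, n = m + 1 := ⟨n - 1, (Nat.succ_pred_eq_of_pos hn).symm⟩
    have hpos : (0:ℝ) ≤ 1 / (((m+1 : ℕ)) : ℝ) := by positivity
    have hTpos : (0:ℝ) < ‖transfer0 ω (m+1)‖ :=
      lt_of_lt_of_le (by norm_num) (opNorm_lower _ (det_transfer0 ω (m+1)))
    have hub := transfer_upper h01 m
    have hlog1 : Real.log (opNorm (transfer0 ω (m+1)))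
        ≤ Real.log (120 * φ ^ |walk ω m|) := by
      rw [opNorm_eq]
      exact Real.log_le_log hTpos hub
    have hlog2 : Real.log (120 * φ ^ |walk ω m|)
        = Real.log 120 + |walk ω m| * Real.log φ := by
      rw [Real.log_mul (by norm_num) (ne_of_gt (rpow_pos _)), Real.log_rpow φ_pos]
    have hstep : walk ω (m+1) = walk ω m + (-1:ℝ)^m * (2 * ω ((m:ℤ)+2) - 1) := by
      unfold walk; rw [Finset.sum_range_succ]
    have habs1 : |(-1:ℝ)^m * (2 * ω ((m:ℤ)+2) - 1)| = 1 := by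
      rw [abs_mul, abs_pow, abs_neg, abs_one, one_pow, one_mul]
      rcases h01 ((m:ℤ)+2) with h | h <;> rw [h] <;> norm_num
    have hwb : |walk ω m| ≤ |walk ω (m+1)| + 1 := by
      have hsub : walk ω (m+1) - (-1:ℝ)^m * (2 * ω ((m:ℤ)+2) - 1) = walk ω m := by
        rw [hstep]; ring
      calc |walk ω m| = |walk ω (m+1) + (-((-1:ℝ)^m * (2 * ω ((m:ℤ)+2) - 1)))| := by
            rw [← sub_eq_add_neg, hsub]
        _ ≤ |walk ω (m+1)| + |(-((-1:ℝ)^m * (2 * ω ((m:ℤ)+2) - 1)))| := abs_add_le _ _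
        _ = |walk ω (m+1)| + 1 := by rw [abs_neg, habs1]
    have key : (1 / (((m+1:ℕ)) : ℝ)) * Real.log (opNorm (transfer0 ω (m+1)))
        ≤ (1 / (((m+1:ℕ)) : ℝ)) * (Real.log 120 + (|walk ω (m+1)| + 1) * Real.log φ) := by
      apply mul_le_mul_of_nonneg_left _ hpos
      calc Real.log (opNorm (transfer0 ω (m+1)))
          ≤ Real.log 120 + |walk ω m| * Real.log φ := by rw [← hlog2]; exact hlog1
        _ ≤ Real.log 120 + (|walk ω (m+1)| + 1) * Real.log φ :=
            add_le_add_right (mul_le_mul_of_nonneg_right hwb hlogφ) _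
    refine key.trans (le_of_eq ?_)
    ring

end Lyap

/-- Proposition 6.1, first part: for the Bernoulli(1/2) potential
`v_n = ξ_n - ξ_{n+1}`, the Lyapunov exponent at energy `E = 0` vanishes almost surely. -/
theorem lyapunov_vanishes_at_zero
    (ν : Measure ℝ)
    (hν : ν = (1 / 2 : ENNReal) • Measure.dirac (0 : ℝ)
            + (1 / 2 : ENNReal) • Measure.dirac (1 : ℝ))
    (P : Measure (ℤ → ℝ)) [IsProbabilityMeasure P] (hP : IsProductMeasureZ ν P) :
    ∀ᵐ ω ∂P, Tendsto (fun n : ℕ => (1 / (n : ℝ)) * Real.log (opNorm (transfer0 ω n)))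
      atTop (nhds 0) := by
  filter_upwards [Lyap.ae01 hν hP, Lyap.slln hν hP] with ω h01 hlim
  exact Lyap.final_det ω h01 hlim


end
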